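/- Given real numbers θ_1, ..., θ_d, the additive subgroup of ℝ^d generated by the standard basis vectors e_1, ..., e_d together with the vector (θ_1, ..., θ_d) is dense in ℝ^d if and only if the numbers 1, θ_1, ..., θ_d are linearly independent over ℚ. -/

import Mathlib

open Filter Topology Metric Module

open Filter Topology Metric Module

lemma line_subset_of_not_discrete {E : Type} [NormedAddCommGroup E] [NormedSpace ℝ E]
    [FiniteDimensional ℝ E] (H : AddSubgroup E) (hH : IsClosed (H : Set E))
    (hnd : ∀ ε > 0, ∃ x ∈ H, x ≠ 0 ∧ ‖x‖ < ε) :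
    ∃ u : E, ‖u‖ = 1 ∧ ∀ t : ℝ, t • u ∈ H := by
  -- choose a sequence
  have hseq : ∀ n : ℕ, ∃ x : E, x ∈ H ∧ x ≠ 0 ∧ ‖x‖ < 1 / (n + 1) := by
    intro n
    obtain ⟨x, hx, hx0, hxn⟩ := hnd (1 / (n + 1)) (by positivity)
    exact ⟨x, hx, hx0, hxn⟩
  choose x hxH hx0 hxn using hseq
  have hnorm_pos : ∀ n, 0 < ‖x n‖ := fun n => norm_pos_iff.mpr (hx0 n)
  have hxlim : Tendsto (fun n => ‖x n‖) atTop (𝓝 0) := by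
    have h1 : Tendsto (fun n : ℕ => 1 / ((n : ℝ) + 1)) atTop (𝓝 0) :=
      tendsto_one_div_add_atTop_nhds_zero_nat
    exact squeeze_zero (fun n => (hnorm_pos n).le) (fun n => (hxn n).le) h1
  set u : ℕ → E := fun n => ‖x n‖⁻¹ • x n with hu
  have husphere : ∀ n, u n ∈ sphere (0 : E) 1 := by
    intro n
    simp only [u, mem_sphere_iff_norm, sub_zero, norm_smul, norm_inv, norm_norm]
    exact inv_mul_cancel₀ (hnorm_pos n).ne'
  obtain ⟨v, hv, φ, hφ, hφlim⟩ := (isCompact_sphere (0 : E) 1).tendsto_subseq husphere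
  refine ⟨v, by simpa using hv, fun t => ?_⟩
  have key : Tendsto (fun n => (⌊t / ‖x (φ n)‖⌋ : ℤ) • x (φ n)) atTop (𝓝 (t • v)) := by
    have heq : ∀ n, (⌊t / ‖x (φ n)‖⌋ : ℤ) • x (φ n)
        = ((⌊t / ‖x (φ n)‖⌋ : ℝ) * ‖x (φ n)‖) • u (φ n) := by
      intro n
      rw [hu, smul_smul, ← Int.cast_smul_eq_zsmul ℝ]
      congr 1
      rw [mul_assoc, mul_inv_cancel₀ (hnorm_pos (φ n)).ne', mul_one]
    simp_rw [heq]
    have hslim : Tendsto (fun n => (⌊t / ‖x (φ n)‖⌋ : ℝ) * ‖x (φ n)‖) atTop (𝓝 t) := by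
      have hx' : Tendsto (fun n => ‖x (φ n)‖) atTop (𝓝 0) := hxlim.comp hφ.tendsto_atTop
      have hbound : ∀ n, |(⌊t / ‖x (φ n)‖⌋ : ℝ) * ‖x (φ n)‖ - t| ≤ ‖x (φ n)‖ := by
        intro n
        have h0 := hnorm_pos (φ n)
        have h1 : (⌊t / ‖x (φ n)‖⌋ : ℝ) ≤ t / ‖x (φ n)‖ := Int.floor_le _
        have h2 : t / ‖x (φ n)‖ - 1 < (⌊t / ‖x (φ n)‖⌋ : ℝ) := Int.sub_one_lt_floor _
        rw [abs_le]
        constructor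
        · nlinarith [mul_le_mul_of_nonneg_right h1 h0.le,
            mul_lt_mul_of_pos_right h2 h0, div_mul_cancel₀ t h0.ne']
        · nlinarith [mul_le_mul_of_nonneg_right h1 h0.le, div_mul_cancel₀ t h0.ne']
      have : Tendsto (fun n => (⌊t / ‖x (φ n)‖⌋ : ℝ) * ‖x (φ n)‖ - t) atTop (𝓝 0) := by
        apply squeeze_zero_norm hbound hx'
      simpa using this.add_const t
    exact hslim.smul hφlim
  have hmem : ∀ n, (⌊t / ‖x (φ n)‖⌋ : ℤ) • x (φ n) ∈ H := fun n =>
    AddSubgroup.zsmul_mem H (hxH (φ n)) _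
  exact hH.mem_of_tendsto key (Filter.Eventually.of_forall hmem)

lemma exists_int_functional : ∀ (n : ℕ) (E : Type) [inst1 : NormedAddCommGroup E]
    [inst2 : NormedSpace ℝ E] [inst3 : FiniteDimensional ℝ E], finrank ℝ E = n →
    ∀ (H : AddSubgroup E), IsClosed (H : Set E) →
    Submodule.span ℝ (H : Set E) = ⊤ → (H : Set E) ≠ Set.univ →
    ∃ f : E →ₗ[ℝ] ℝ, f ≠ 0 ∧ ∀ x ∈ H, ∃ m : ℤ, f x = m := by
  intro n
  induction n using Nat.strong_induction_on with
  | _ n ih =>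
  intro E _ _ _ hrank H hclosed hspan hne
  rcases Nat.eq_zero_or_pos n with hn0 | hnpos
  · exfalso
    subst hn0
    have : Subsingleton E := finrank_zero_iff.mp hrank
    apply hne
    ext x
    simp only [Set.mem_univ, iff_true, SetLike.mem_coe]
    rw [Subsingleton.elim x 0]
    exact H.zero_mem
  by_cases hd : ∀ ε > 0, ∃ x ∈ H, x ≠ 0 ∧ ‖x‖ < ε
  · -- non-discrete case : quotient by a line
    obtain ⟨u, hu1, huH⟩ := line_subset_of_not_discrete H hclosed hd
    have hu0 : u ≠ 0 := fun h => by simp [h] at hu1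
    set W : Submodule ℝ E := ℝ ∙ u with hW
    haveI hWc : IsClosed (W : Set E) := W.closed_of_finiteDimensional
    have hWH : (W : Set E) ⊆ (H : Set E) := by
      intro x hx
      obtain ⟨t, rfl⟩ := Submodule.mem_span_singleton.mp hx
      exact huH t
    have hq : finrank ℝ (E ⧸ W) = n - 1 := by
      have h1 := Submodule.finrank_quotient_add_finrank W
      rw [finrank_span_singleton hu0, hrank] at h1
      omega
    set H' : AddSubgroup (E ⧸ W) := H.map W.mkQ.toAddMonoidHom with hH'
    have hmem' : ∀ z : E ⧸ W, z ∈ H' ↔ ∃ y ∈ H, W.mkQ y = z := by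
      intro z
      simp [hH', AddSubgroup.mem_map]
    have hpre : (W.mkQ) ⁻¹' (H' : Set (E ⧸ W)) = (H : Set E) := by
      ext x
      simp only [Set.mem_preimage, SetLike.mem_coe]
      rw [hmem' (W.mkQ x)]
      constructor
      · rintro ⟨y, hy, hyx⟩
        have : x - y ∈ W := by
          rw [← Submodule.Quotient.eq]
          exact hyx.symm
        have := hWH this
        simpa using add_mem this hy
      · intro hx
        exact ⟨x, hx, rfl⟩
    have hopen : IsOpenMap (W.mkQ) := QuotientAddGroup.isOpenMap_coe
    have hclosed' : IsClosed (H' : Set (E ⧸ W)) := by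
      rw [← isOpen_compl_iff]
      have hcompl : (H' : Set (E ⧸ W))ᶜ = W.mkQ '' ((H : Set E)ᶜ) := by
        ext z
        obtain ⟨x, rfl⟩ := W.mkQ_surjective z
        simp only [Set.mem_compl_iff, Set.mem_image, SetLike.mem_coe]
        constructor
        · intro hz
          refine ⟨x, fun hx => hz ?_, rfl⟩
          rw [hmem' (W.mkQ x)]
          exact ⟨x, hx, rfl⟩
        · rintro ⟨y, hy, hyz⟩
          intro hz
          apply hy
          have hxH : x ∈ H := by
            have := hpre ▸ Set.mem_preimage.mpr (show W.mkQ x ∈ (H' : Set (E ⧸ W)) from hz)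
            exact this
          have hxy : x - y ∈ W := by
            rw [← Submodule.Quotient.eq]
            exact hyz.symm
          have : x - (x - y) ∈ H := H.sub_mem hxH (hWH hxy)
          simpa using this
      rw [hcompl]
      exact hopen _ (isOpen_compl_iff.mpr hclosed)
    have hspan' : Submodule.span ℝ (H' : Set (E ⧸ W)) = ⊤ := by
      have hcoe : (H' : Set (E ⧸ W)) = W.mkQ '' (H : Set E) := by
        ext z; simp [hmem' z, Set.mem_image]
      rw [hcoe, Submodule.span_image, hspan, Submodule.map_top, Submodule.range_mkQ]
    have hne' : (H' : Set (E ⧸ W)) ≠ Set.univ := by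
      intro hcontra
      apply hne
      rw [← hpre, hcontra]
      simp
    obtain ⟨g, hg0, hgint⟩ := ih (n - 1) (by omega) (E ⧸ W) hq H' hclosed' hspan' hne'
    refine ⟨g.comp W.mkQ, ?_, ?_⟩
    · intro hf0
      apply hg0
      apply LinearMap.ext
      intro z
      obtain ⟨x, rfl⟩ := W.mkQ_surjective z
      exact LinearMap.congr_fun hf0 x
    · intro x hx
      exact hgint (W.mkQ x) ((hmem' _).mpr ⟨x, hx, rfl⟩)
  · push_neg at hd
    obtain ⟨ε, hε, hsep⟩ := hd
    set L : Submodule ℤ E := AddSubgroup.toIntSubmodule H with hL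
    have hLH : (L : Set E) = (H : Set E) := rfl
    haveI : DiscreteTopology L := by
      apply discreteTopology_of_isOpen_singleton_zero
      have : {(0 : L)} = (Subtype.val : L → E) ⁻¹' (Metric.ball (0 : E) ε) := by
        ext x
        simp only [Set.mem_singleton_iff, Set.mem_preimage, Metric.mem_ball, dist_zero_right]
        constructor
        · rintro rfl; simpa using hε
        · intro hx
          by_contra hx0
          have : ε ≤ ‖(x : E)‖ := hsep x x.2 (fun h => hx0 (Subtype.ext h))
          exact absurd hx (not_lt.mpr this)
      rw [this]
      exact Metric.isOpen_ball.preimage continuous_subtype_val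
    haveI : IsZLattice ℝ L := ⟨by rw [hLH]; exact hspan⟩
    haveI : ProperSpace E := FiniteDimensional.proper ℝ E
    haveI : Module.Finite ℤ L := ZLattice.module_finite ℝ L
    haveI : Module.Free ℤ L := ZLattice.module_free ℝ L
    set b₀ := Module.Free.chooseBasis ℤ L with hb₀
    set B := b₀.ofZLatticeBasis ℝ L with hB
    have hcard : 0 < Fintype.card (Module.Free.ChooseBasisIndex ℤ L) := by
      rw [← Module.finrank_eq_card_chooseBasisIndex, ZLattice.rank ℝ L, hrank]
      exact hnpos
    obtain ⟨i0⟩ := Fintype.card_pos_iff.mp hcard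
    refine ⟨B.coord i0, ?_, ?_⟩
    · intro hf0
      have h1 : B.coord i0 (B i0) = 1 := by simp
      rw [hf0] at h1
      simpa using h1
    · intro x hx
      refine ⟨b₀.repr ⟨x, hx⟩ i0, ?_⟩
      have := b₀.ofZLatticeBasis_repr_apply ℝ L ⟨x, hx⟩ i0
      rw [Basis.coord_apply, ← hB] at *
      rw [this]

lemma not_indep_iff (d : ℕ) (θ : Fin d → ℝ) :
    ¬ LinearIndependent ℚ (Fin.cons 1 θ : Fin (d + 1) → ℝ) ↔
    ∃ m : Fin (d + 1) → ℤ, m ≠ 0 ∧ (m 0 : ℝ) + ∑ i, (m i.succ : ℝ) * θ i = 0 := by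
  rw [← LinearIndependent.iff_fractionRing ℤ ℚ, Fintype.linearIndependent_iff]
  push_neg
  constructor
  · rintro ⟨m, hm, i, hi⟩
    refine ⟨m, fun h0 => hi (by rw [h0]; rfl), ?_⟩
    have := hm
    rw [Fin.sum_univ_succ] at this
    simpa [zsmul_eq_mul] using this
  · rintro ⟨m, hm0, hrel⟩
    refine ⟨m, ?_, ?_⟩
    · rw [Fin.sum_univ_succ]
      simpa [zsmul_eq_mul] using hrel
    · by_contra h
      push_neg at h
      exact hm0 (funext h)

noncomputable def coeffFunctional (d : ℕ) (c : Fin d → ℝ) : (Fin d → ℝ) →ₗ[ℝ] ℝ :=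
  ∑ i, c i • LinearMap.proj i

lemma coeffFunctional_apply (d : ℕ) (c : Fin d → ℝ) (x : Fin d → ℝ) :
    coeffFunctional d c x = ∑ i, c i * x i := by
  simp [coeffFunctional, LinearMap.sum_apply, LinearMap.proj]

lemma coeffFunctional_single (d : ℕ) (c : Fin d → ℝ) (k : Fin d) :
    coeffFunctional d c (Pi.single k 1) = c k := by
  rw [coeffFunctional_apply]
  rw [Finset.sum_eq_single k]
  · simp
  · intro i _ hik
    simp [Pi.single_apply, hik.symm]  -- careful : single k 1 i = if i = k? check
  · simp

lemma theta_decomp (d : ℕ) (θ : Fin d → ℝ) :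
    θ = ∑ k, θ k • (Pi.single k 1 : Fin d → ℝ) := by
  ext j
  simp [Pi.single_apply, Finset.sum_apply, mul_ite]


theorem dense_iff_linearIndependent (d : ℕ) (θ : Fin d → ℝ) :
    Dense ((AddSubgroup.closure
        (Set.range (fun k : Fin d => (Pi.single k 1 : Fin d → ℝ)) ∪ {θ}) :
        AddSubgroup (Fin d → ℝ)) : Set (Fin d → ℝ)) ↔
      LinearIndependent ℚ (Fin.cons 1 θ : Fin (d + 1) → ℝ) := by
  set S : Set (Fin d → ℝ) :=
    Set.range (fun k : Fin d => (Pi.single k 1 : Fin d → ℝ)) ∪ {θ} with hS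
  set G : AddSubgroup (Fin d → ℝ) := AddSubgroup.closure S with hG
  constructor
  · intro hdense
    by_contra hLI
    rw [not_indep_iff d θ] at hLI
    obtain ⟨m, hm0, hrel⟩ := hLI
    -- the functional
    set f := coeffFunctional d (fun i => (m i.succ : ℝ)) with hf
    have hfθ : f θ = -(m 0 : ℝ) := by
      rw [coeffFunctional_apply]
      linarith [hrel]
    -- the integer range subgroup
    set Z : AddSubgroup ℝ := (Int.castAddHom ℝ).range with hZ
    have hGZ : G ≤ Z.comap f.toAddMonoidHom := by
      rw [hG]
      apply AddSubgroup.closure_le _ |>.mpr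
      rintro x (⟨k, rfl⟩ | rfl)
      · exact ⟨m k.succ, by simp [hf, coeffFunctional_single]⟩
      · refine ⟨-(m 0), ?_⟩
        simp only [Int.coe_castAddHom, Int.cast_neg, LinearMap.toAddMonoidHom_coe]
        rw [hfθ]
    have hZclosed : IsClosed (Z : Set ℝ) := by
      have : (Z : Set ℝ) = Set.range ((↑) : ℤ → ℝ) := by
        rw [hZ, AddMonoidHom.coe_range, Int.coe_castAddHom]
      rw [this]
      exact Int.isClosedEmbedding_coe_real.isClosed_range
    have hCclosed : IsClosed (f ⁻¹' (Z : Set ℝ)) :=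
      hZclosed.preimage f.continuous_of_finiteDimensional
    have hsub : closure (G : Set (Fin d → ℝ)) ⊆ f ⁻¹' (Z : Set ℝ) :=
      closure_minimal hGZ hCclosed
    -- find a point with f-value 1/2
    obtain ⟨j, hj⟩ : ∃ j : Fin d, m j.succ ≠ 0 := by
      by_contra h
      push_neg at h
      apply hm0
      funext i
      rcases Fin.eq_zero_or_eq_succ i with rfl | ⟨j, rfl⟩
      · have : (m 0 : ℝ) = 0 := by
          rw [← hrel]
          simp [h]
        exact_mod_cast this
      · exact h j
    set v : Fin d → ℝ := (1 / (2 * (m j.succ : ℝ))) • (Pi.single j 1 : Fin d → ℝ) with hv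
    have hfv : f v = 1 / 2 := by
      rw [hv, map_smul, coeffFunctional_single]
      have : (m j.succ : ℝ) ≠ 0 := Int.cast_ne_zero.mpr hj
      field_simp
      rw [smul_eq_mul]
      field_simp
    have hvmem : v ∈ f ⁻¹' (Z : Set ℝ) := hsub (hdense.closure_eq ▸ Set.mem_univ v)
    obtain ⟨n, hn⟩ := hvmem
    rw [hfv] at hn
    simp only [Int.coe_castAddHom] at hn
    have h2 : ((2 * n : ℤ) : ℝ) = 1 := by push_cast; linarith
    have : (2 * n : ℤ) = 1 := by exact_mod_cast h2
    omega
  · intro hLI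
    by_contra hdense
    set Hc : AddSubgroup (Fin d → ℝ) := G.topologicalClosure with hHc
    have hHcS : (Hc : Set (Fin d → ℝ)) = closure (G : Set (Fin d → ℝ)) := rfl
    have hclosed : IsClosed (Hc : Set (Fin d → ℝ)) := by
      rw [hHcS]; exact isClosed_closure
    have hmemG : ∀ x ∈ S, x ∈ Hc :=
      fun x hx => subset_closure (AddSubgroup.subset_closure hx)
    have hspan : Submodule.span ℝ (Hc : Set (Fin d → ℝ)) = ⊤ := by
      apply top_unique
      rw [← (Pi.basisFun ℝ (Fin d)).span_eq]
      apply Submodule.span_le.mpr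
      rintro x ⟨k, rfl⟩
      apply Submodule.subset_span
      exact hmemG _ (Or.inl ⟨k, by simp [Pi.basisFun_apply]⟩)
    have hne : (Hc : Set (Fin d → ℝ)) ≠ Set.univ := by
      rw [hHcS]
      intro h
      exact hdense (by rw [dense_iff_closure_eq, h])
    obtain ⟨f, hf0, hfint⟩ := exists_int_functional (finrank ℝ (Fin d → ℝ))
      (Fin d → ℝ) rfl Hc hclosed hspan hne
    choose nf hnf using fun k : Fin d => hfint _ (hmemG _ (Or.inl ⟨k, rfl⟩))
    obtain ⟨n0, hn0⟩ := hfint θ (hmemG θ (Or.inr rfl))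
    have hfθ : f θ = ∑ k, θ k * (nf k : ℝ) := by
      conv_lhs => rw [theta_decomp d θ]
      rw [map_sum]
      congr 1
      funext k
      rw [map_smul, hnf k, smul_eq_mul]
    have hfθ' : f θ = (n0 : ℝ) := hn0
    set m' : Fin (d + 1) → ℤ := Fin.cons (-n0) nf with hm'
    apply (not_indep_iff d θ).mpr ?_ hLI
    refine ⟨m', ?_, ?_⟩
    · intro h0
      apply hf0
      apply Module.Basis.ext (Pi.basisFun ℝ (Fin d))
      intro k
      have hzero : nf k = 0 := by
        have := congrFun h0 k.succ
        simpa [hm', Fin.cons_succ] using this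
      have : f (Pi.single k 1) = 0 := by
        rw [hnf k] at *
        · simp [hzero]
      simpa [Pi.basisFun_apply] using this
    · have h1 : (m' 0 : ℝ) = -(n0 : ℝ) := by simp [hm']
      have h2 : ∀ i : Fin d, (m' i.succ : ℝ) = (nf i : ℝ) := by
        intro i; simp [hm', Fin.cons_succ]
      rw [h1]
      simp_rw [h2]
      rw [hfθ'] at hfθ
      have : ∑ i : Fin d, (nf i : ℝ) * θ i = (n0 : ℝ) := by
        rw [hfθ]
        congr 1
        funext i
        ring
      rw [this]
      ring
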